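/- If E ⊆ ℝ is θ-thick for some θ ∈ (0,1), then its Barlow–Taylor macroscopic Hausdorff dimension satisfies Dim_H(E) ≥ 1 − θ. -/

import Mathlib

open Real Set

set_option maxHeartbeats 1000000

noncomputable section

/-- The `n`-th shell of a set `A ⊆ ℝ`. -/
def shell (n : ℕ) (A : Set ℝ) : Set ℝ :=
  A ∩ (Set.Ioc (-(Real.exp (n + 1))) (-(Real.exp n)) ∪ Set.Ico (Real.exp n) (Real.exp (n + 1)))

/-- The `ρ`-dimensional Hausdorff content of the `n`-th shell of `A`, computed with
cutoff `c₀`. -/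
def nuCont (c₀ : ℝ) (n : ℕ) (ρ : ℝ) (A : Set ℝ) : ℝ :=
  sInf {r : ℝ | ∃ (m : ℕ) (a b : Fin m → ℝ),
    (∀ i, c₀ ≤ b i - a i) ∧
    shell n A ⊆ ⋃ i, Set.Icc (a i) (b i) ∧
    r = ∑ i, ((b i - a i) / Real.exp n) ^ ρ}

/-- The Barlow–Taylor macroscopic Hausdorff dimension of `A` (with the convention
`c₀ = 1`). -/
def macroDimH (A : Set ℝ) : ℝ :=
  sInf {ρ : ℝ | 0 < ρ ∧ Summable fun n : ℕ => nuCont 1 n ρ A}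

/-- The grid `Π_n(θ) = {e^n + j e^{nθ} : j ∈ ℤ, 0 ≤ j ≤ e^{n(1−θ)+1} − e^{n(1−θ)}}`. -/
def thickGrid (θ : ℝ) (n : ℕ) : Set ℝ :=
  {x : ℝ | ∃ j : ℕ, (j : ℝ) ≤ Real.exp ((n : ℝ) * (1 - θ) + 1) - Real.exp ((n : ℝ) * (1 - θ)) ∧
    x = Real.exp n + (j : ℝ) * Real.exp ((n : ℝ) * θ)}

/-- A set `E ⊆ ℝ` is `θ`-thick if, for all sufficiently large `n`, it meets
`[x, x + e^{θn}]` for every grid point `x ∈ Π_n(θ)`. -/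
def IsThick (θ : ℝ) (E : Set ℝ) : Prop :=
  ∃ M : ℕ, ∀ n : ℕ, M ≤ n → ∀ x ∈ thickGrid θ n,
    (E ∩ Set.Icc x (x + Real.exp (θ * n))).Nonempty

/-- Counting naturals in a real interval. -/
lemma card_le_of_forall_mem_Icc (s : Finset ℕ) (hs : s.Nonempty) (c d : ℝ)
    (h : ∀ j ∈ s, c ≤ (j : ℝ) ∧ (j : ℝ) ≤ d) : (s.card : ℝ) ≤ d - c + 1 := by
  set j0 := s.min' hs with hj0def
  have hj0 : j0 ∈ s := s.min'_mem hs
  have hc : c ≤ (j0 : ℝ) := (h j0 hj0).1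
  have hd0 : (j0 : ℝ) ≤ d := (h j0 hj0).2
  have hdc : (0 : ℝ) ≤ d - c := by linarith
  have hsub : s ⊆ Finset.Icc j0 (j0 + ⌊d - c⌋₊) := by
    intro j hj
    rw [Finset.mem_Icc]
    have hmin : j0 ≤ j := s.min'_le j hj
    refine ⟨hmin, ?_⟩
    have h1 : (j : ℝ) ≤ d := (h j hj).2
    have h3 : j - j0 ≤ ⌊d - c⌋₊ := by
      apply Nat.le_floor
      rw [Nat.cast_sub hmin]
      linarith
    omega
  have hcard : s.card ≤ ⌊d - c⌋₊ + 1 := by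
    have := Finset.card_le_card hsub
    rw [Nat.card_Icc] at this
    omega
  have hfl : (⌊d - c⌋₊ : ℝ) ≤ d - c := Nat.floor_le hdc
  calc (s.card : ℝ) ≤ (⌊d - c⌋₊ : ℝ) + 1 := by exact_mod_cast hcard
    _ ≤ d - c + 1 := by linarith

/-- An explicit cover of the `n`-th shell by unit intervals. -/
lemma mem_coverSet (n : ℕ) (ρ : ℝ) (A : Set ℝ) :
    ((⌊2 * Real.exp ((n : ℝ) + 1)⌋₊ + 1 : ℕ) : ℝ) * ((1 : ℝ) / Real.exp n) ^ ρ ∈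
    {r : ℝ | ∃ (m : ℕ) (a b : Fin m → ℝ),
      (∀ i, (1 : ℝ) ≤ b i - a i) ∧
      shell n A ⊆ ⋃ i, Set.Icc (a i) (b i) ∧
      r = ∑ i, ((b i - a i) / Real.exp n) ^ ρ} := by
  set m : ℕ := ⌊2 * Real.exp ((n : ℝ) + 1)⌋₊ + 1 with hm
  refine ⟨m, fun i => -Real.exp ((n : ℝ) + 1) + (i : ℝ), fun i => -Real.exp ((n : ℝ) + 1) + (i : ℝ) + 1, ?_, ?_, ?_⟩
  · intro i; simp
  · intro x hx
    have hx2 := hx.2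
    have hb : -Real.exp ((n : ℝ) + 1) ≤ x ∧ x ≤ Real.exp ((n : ℝ) + 1) := by
      rcases hx2 with h | h
      · have h1 := h.1
        have h2 := h.2
        have := Real.exp_pos ((n : ℝ) + 1)
        have := Real.exp_pos (n : ℝ)
        constructor <;> nlinarith
      · have h1 := h.1
        have h2 := h.2
        have := Real.exp_pos ((n : ℝ) + 1)
        have := Real.exp_pos (n : ℝ)
        constructor <;> nlinarith
    have hnn : (0 : ℝ) ≤ x + Real.exp ((n : ℝ) + 1) := by linarith [hb.1]
    set k : ℕ := ⌊x + Real.exp ((n : ℝ) + 1)⌋₊ with hk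
    have hklt : k < m := by
      have : k ≤ ⌊2 * Real.exp ((n : ℝ) + 1)⌋₊ :=
        Nat.floor_le_floor (by linarith [hb.2])
      omega
    refine Set.mem_iUnion.mpr ⟨⟨k, hklt⟩, ?_⟩
    have hfle : (k : ℝ) ≤ x + Real.exp ((n : ℝ) + 1) := Nat.floor_le hnn
    have hflt : x + Real.exp ((n : ℝ) + 1) < (k : ℝ) + 1 :=
      Nat.lt_floor_add_one (x + Real.exp ((n : ℝ) + 1))
    constructor
    · show -Real.exp ((n : ℝ) + 1) + (k : ℝ) ≤ x
      linarith
    · show x ≤ -Real.exp ((n : ℝ) + 1) + (k : ℝ) + 1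
      linarith
  · simp only [add_sub_cancel_left]
    rw [Finset.sum_const, Finset.card_univ, Fintype.card_fin, nsmul_eq_mul]

lemma nuCont_nonneg (n : ℕ) (ρ : ℝ) (A : Set ℝ) : 0 ≤ nuCont 1 n ρ A := by
  apply Real.sInf_nonneg
  rintro r ⟨m, a, b, hlen, -, rfl⟩
  apply Finset.sum_nonneg
  intro i _
  apply Real.rpow_nonneg
  apply div_nonneg _ (Real.exp_pos _).le
  linarith [hlen i]

lemma nuCont_bddBelow (n : ℕ) (ρ : ℝ) (A : Set ℝ) :
    BddBelow {r : ℝ | ∃ (m : ℕ) (a b : Fin m → ℝ),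
      (∀ i, (1 : ℝ) ≤ b i - a i) ∧
      shell n A ⊆ ⋃ i, Set.Icc (a i) (b i) ∧
      r = ∑ i, ((b i - a i) / Real.exp n) ^ ρ} := by
  refine ⟨0, ?_⟩
  rintro r ⟨m, a, b, hlen, -, rfl⟩
  apply Finset.sum_nonneg
  intro i _
  apply Real.rpow_nonneg
  apply div_nonneg _ (Real.exp_pos _).le
  linarith [hlen i]

lemma summable_nuCont_two (A : Set ℝ) : Summable (fun n : ℕ => nuCont 1 n 2 A) := by
  have hgeom : Summable (fun n : ℕ => 3 * Real.exp 1 * Real.exp (-1) ^ n) := by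
    apply Summable.mul_left
    exact summable_geometric_of_lt_one (Real.exp_pos _).le
      (Real.exp_lt_one_iff.mpr (by norm_num))
  apply Summable.of_nonneg_of_le (fun n => nuCont_nonneg n 2 A) _ hgeom
  intro n
  have hle : nuCont 1 n 2 A ≤
      ((⌊2 * Real.exp ((n : ℝ) + 1)⌋₊ + 1 : ℕ) : ℝ) * ((1 : ℝ) / Real.exp n) ^ (2 : ℝ) :=
    csInf_le (nuCont_bddBelow n 2 A) (mem_coverSet n 2 A)
  refine hle.trans ?_
  have h1 : ((⌊2 * Real.exp ((n : ℝ) + 1)⌋₊ + 1 : ℕ) : ℝ) ≤ 3 * Real.exp ((n : ℝ) + 1) := by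
    push_cast
    have := Nat.floor_le (by positivity : (0 : ℝ) ≤ 2 * Real.exp ((n : ℝ) + 1))
    have := Real.one_le_exp (by positivity : (0 : ℝ) ≤ (n : ℝ) + 1)
    linarith
  have h2 : ((1 : ℝ) / Real.exp n) ^ (2 : ℝ) = Real.exp (-(n : ℝ) * 2) := by
    rw [one_div, ← Real.exp_neg, Real.exp_mul]
  rw [h2]
  have h3 : (0 : ℝ) ≤ Real.exp (-(n : ℝ) * 2) := (Real.exp_pos _).le
  calc ((⌊2 * Real.exp ((n : ℝ) + 1)⌋₊ + 1 : ℕ) : ℝ) * Real.exp (-(n : ℝ) * 2)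
      ≤ 3 * Real.exp ((n : ℝ) + 1) * Real.exp (-(n : ℝ) * 2) := by
        apply mul_le_mul_of_nonneg_right h1 h3
    _ = 3 * Real.exp 1 * Real.exp (-1) ^ n := by
        rw [← Real.exp_nat_mul, mul_assoc, mul_assoc, ← Real.exp_add, ← Real.exp_add]
        congr 1
        ring

/-- Key lower bound: if `E` is thick then for large `n` every admissible cover
has total `ρ`-content at least `1/4`. -/
lemma nuCont_lower (θ ρ : ℝ) (hθ0 : 0 < θ) (hθ1 : θ < 1) (hρ0 : 0 < ρ) (hρ1 : ρ < 1 - θ)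
    (E : Set ℝ) (M : ℕ)
    (hM : ∀ n : ℕ, M ≤ n → ∀ x ∈ thickGrid θ n,
      (E ∩ Set.Icc x (x + Real.exp (θ * n))).Nonempty)
    (n : ℕ) (hn1 : M ≤ n)
    (hn2 : 2 / (Real.exp 1 - 2) ≤ Real.exp ((n : ℝ) * (1 - θ)))
    (hn3 : 2 * Real.exp ((n : ℝ) * ρ) ≤ Real.exp ((n : ℝ) * (1 - θ))) :
    (1 / 4 : ℝ) ≤ nuCont 1 n ρ E := by
  have he2 : (2 : ℝ) < Real.exp 1 := by
    have := Real.exp_one_gt_d9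
    linarith
  set En : ℝ := Real.exp ((n : ℝ) * (1 - θ)) with hEn
  set Eθ : ℝ := Real.exp ((n : ℝ) * θ) with hEθ
  have hEθpos : 0 < Eθ := Real.exp_pos _
  have hEnpos : 0 < En := Real.exp_pos _
  have hEn1 : (1 : ℝ) ≤ En :=
    Real.one_le_exp (mul_nonneg (Nat.cast_nonneg n) (by linarith))
  have hEn2 : 2 ≤ (Real.exp 1 - 2) * En := by
    rw [div_le_iff₀ (by linarith)] at hn2
    linarith [hn2]
  set P : ℝ := Real.exp ((n : ℝ) * (1 - θ) + 1) - Real.exp ((n : ℝ) * (1 - θ)) with hP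
  have hPEn : P = (Real.exp 1 - 1) * En := by
    rw [hP, Real.exp_add]; ring
  have hP3 : (3 : ℝ) ≤ P := by
    rw [hPEn]
    nlinarith
  have hfl3 : 3 ≤ ⌊P⌋₊ := Nat.le_floor (by exact_mod_cast hP3)
  set K : ℕ := ⌊P⌋₊ - 1 with hK
  have hK1 : (K : ℝ) = (⌊P⌋₊ : ℝ) - 1 := by
    have : 1 ≤ ⌊P⌋₊ := by omega
    push_cast [hK, Nat.cast_sub this]
    ring
  have hKge : En ≤ (K : ℝ) := by
    have h1 : P - 1 < (⌊P⌋₊ : ℝ) := Nat.sub_one_lt_floor P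
    rw [hK1]
    nlinarith [hPEn, hEn2]
  have hKP : (K : ℝ) + 1 ≤ P := by
    rw [hK1]
    have := Nat.floor_le (by linarith : (0 : ℝ) ≤ P)
    linarith
  -- exp(n) = En * Eθ and exp(n+1) relation
  have hexpn : Real.exp (n : ℝ) = En * Eθ := by
    rw [hEn, hEθ, ← Real.exp_add]; ring_nf
  have hPEθ : P * Eθ = Real.exp ((n : ℝ) + 1) - Real.exp (n : ℝ) := by
    rw [hP, sub_mul, hEθ, ← Real.exp_add, ← Real.exp_add]
    ring_nf
  -- grid points and thick points
  set x : Fin K → ℝ := fun j => Real.exp (n : ℝ) + (j : ℝ) * Eθ with hx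
  have hy : ∀ j : Fin K, ∃ y, y ∈ E ∧ y ∈ Set.Icc (x j) (x j + Real.exp (θ * n)) := by
    intro j
    have hjP : ((j : ℕ) : ℝ) ≤ P := by
      have : ((j : ℕ) : ℝ) < (K : ℝ) := by exact_mod_cast j.2
      linarith
    have hgrid : x j ∈ thickGrid θ n := ⟨j, hjP, rfl⟩
    obtain ⟨y, hyE, hyI⟩ := hM n hn1 (x j) hgrid
    exact ⟨y, hyE, hyI⟩
  choose y hyE hyI using hy
  have hθn : Real.exp (θ * (n : ℝ)) = Eθ := by rw [hEθ, mul_comm]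
  have hyshell : ∀ j : Fin K, y j ∈ shell n E := by
    intro j
    refine ⟨hyE j, Or.inr ⟨?_, ?_⟩⟩
    · have h1 : Real.exp (n : ℝ) + ((j : ℕ) : ℝ) * Eθ ≤ y j := (hyI j).1
      have h0 : (0 : ℝ) ≤ ((j : ℕ) : ℝ) * Eθ := by positivity
      linarith
    · have h2 : y j ≤ Real.exp (n : ℝ) + ((j : ℕ) : ℝ) * Eθ + Eθ := by
        have h := (hyI j).2
        rw [hθn] at h
        exact h
      have hjb : ((j : ℕ) : ℝ) + 2 ≤ P := by
        have : ((j : ℕ) : ℝ) + 1 ≤ (K : ℝ) := by exact_mod_cast j.2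
        linarith
      have hprod : (0 : ℝ) ≤ (P - (((j : ℕ) : ℝ) + 2)) * Eθ :=
        mul_nonneg (by linarith) hEθpos.le
      nlinarith [hPEθ]
  -- now bound any admissible cover
  rw [nuCont]
  apply le_csInf ⟨_, mem_coverSet n ρ E⟩
  rintro r ⟨m, a, b, hlen, hcov, rfl⟩
  have hterm_nonneg : ∀ i : Fin m, 0 ≤ ((b i - a i) / Real.exp (n : ℝ)) ^ ρ := by
    intro i
    apply Real.rpow_nonneg
    apply div_nonneg _ (Real.exp_pos _).le
    linarith [hlen i]
  -- choose a covering interval for each thick point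
  have hfib : ∀ j : Fin K, ∃ i : Fin m, y j ∈ Set.Icc (a i) (b i) := by
    intro j
    have := hcov (hyshell j)
    exact Set.mem_iUnion.mp this
  choose f hf using hfib
  -- fiber counting
  have hfiber : ∀ i : Fin m,
      ((Finset.univ.filter (fun j : Fin K => f j = i)).card : ℝ) ≤ (b i - a i) / Eθ + 2 := by
    intro i
    set s : Finset ℕ := (Finset.univ.filter (fun j : Fin K => f j = i)).image Fin.val with hs
    have hcards : s.card = (Finset.univ.filter (fun j : Fin K => f j = i)).card :=
      Finset.card_image_of_injective _ Fin.val_injective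
    rcases s.eq_empty_or_nonempty with hemp | hne
    · rw [← hcards, hemp]
      simp only [Finset.card_empty, Nat.cast_zero]
      have hle1 := hlen i
      have hdiv : (0 : ℝ) ≤ (b i - a i) / Eθ := div_nonneg (by linarith) hEθpos.le
      linarith
    · rw [← hcards]
      have hkey := card_le_of_forall_mem_Icc s hne
        ((a i - Real.exp (n : ℝ) - Eθ) / Eθ) ((b i - Real.exp (n : ℝ)) / Eθ) ?_
      · calc (s.card : ℝ) ≤ (b i - Real.exp (n : ℝ)) / Eθ - (a i - Real.exp (n : ℝ) - Eθ) / Eθ + 1 := hkey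
          _ = (b i - a i) / Eθ + 2 := by field_simp; ring
      · intro jv hjv
        rw [hs, Finset.mem_image] at hjv
        obtain ⟨j, hjmem, rfl⟩ := hjv
        rw [Finset.mem_filter] at hjmem
        have hfj : f j = i := hjmem.2
        have hIcc := hf j
        rw [hfj] at hIcc
        have h1 : a i ≤ y j := hIcc.1
        have h2 : y j ≤ b i := hIcc.2
        have h3 : Real.exp (n : ℝ) + ((j : ℕ) : ℝ) * Eθ ≤ y j := (hyI j).1
        have h4 : y j ≤ Real.exp (n : ℝ) + ((j : ℕ) : ℝ) * Eθ + Eθ := by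
          have h := (hyI j).2
          rw [hθn] at h
          exact h
        constructor
        · rw [div_le_iff₀ hEθpos]
          linarith
        · rw [le_div_iff₀ hEθpos]
          linarith
  have hcount : (K : ℝ) ≤ ∑ i : Fin m, ((b i - a i) / Eθ + 2) := by
    have hcard : (Finset.univ : Finset (Fin K)).card =
        ∑ i : Fin m, (Finset.univ.filter (fun j : Fin K => f j = i)).card :=
      Finset.card_eq_sum_card_fiberwise (fun j _ => Finset.mem_univ (f j))
    have : (K : ℝ) = ∑ i : Fin m, ((Finset.univ.filter (fun j : Fin K => f j = i)).card : ℝ) := by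
      rw [← Nat.cast_sum, ← hcard, Finset.card_univ, Fintype.card_fin]
    rw [this]
    exact Finset.sum_le_sum (fun i _ => hfiber i)
  set r : ℝ := ∑ i : Fin m, ((b i - a i) / Real.exp (n : ℝ)) ^ ρ with hr
  have hrnonneg : 0 ≤ r := Finset.sum_nonneg (fun i _ => hterm_nonneg i)
  by_cases hbig : ∃ i : Fin m, Real.exp (n : ℝ) ≤ b i - a i
  · obtain ⟨i0, hi0⟩ := hbig
    have h1 : (1 : ℝ) ≤ ((b i0 - a i0) / Real.exp (n : ℝ)) ^ ρ := by
      apply Real.one_le_rpow _ hρ0.le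
      rw [le_div_iff₀ (Real.exp_pos _)]
      linarith
    have h2 : ((b i0 - a i0) / Real.exp (n : ℝ)) ^ ρ ≤ r :=
      Finset.single_le_sum (fun i _ => hterm_nonneg i) (Finset.mem_univ i0)
    linarith
  · push_neg at hbig
    have hterm1 : ∀ i : Fin m, (b i - a i) / Real.exp (n : ℝ) ≤
        ((b i - a i) / Real.exp (n : ℝ)) ^ ρ := by
      intro i
      have ht0 : 0 < (b i - a i) / Real.exp (n : ℝ) := by
        apply div_pos _ (Real.exp_pos _); linarith [hlen i]
      have ht1 : (b i - a i) / Real.exp (n : ℝ) ≤ 1 := by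
        rw [div_le_one (Real.exp_pos _)]
        linarith [hbig i]
      have := Real.rpow_le_rpow_of_exponent_ge ht0 ht1 (by linarith : ρ ≤ 1)
      rwa [Real.rpow_one] at this
    have hterm2 : ∀ i : Fin m, Real.exp (-((n : ℝ) * ρ)) ≤
        ((b i - a i) / Real.exp (n : ℝ)) ^ ρ := by
      intro i
      have hbase : Real.exp (-(n : ℝ)) ≤ (b i - a i) / Real.exp (n : ℝ) := by
        rw [Real.exp_neg, inv_eq_one_div, div_le_div_iff₀ (Real.exp_pos _) (Real.exp_pos _)]
        nlinarith [hlen i, Real.exp_pos (n : ℝ)]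
      have := Real.rpow_le_rpow (Real.exp_pos _).le hbase hρ0.le
      rwa [← Real.exp_mul, neg_mul] at this
    have hS1 : ∑ i : Fin m, (b i - a i) / Real.exp (n : ℝ) ≤ r :=
      Finset.sum_le_sum (fun i _ => hterm1 i)
    have hS2 : (m : ℝ) * Real.exp (-((n : ℝ) * ρ)) ≤ r := by
      have : ∑ i : Fin m, Real.exp (-((n : ℝ) * ρ)) ≤ r :=
        Finset.sum_le_sum (fun i _ => hterm2 i)
      rwa [Finset.sum_const, Finset.card_univ, Fintype.card_fin, nsmul_eq_mul] at this
    -- rewrite count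
    have hsplit : ∑ i : Fin m, ((b i - a i) / Eθ + 2) =
        En * (∑ i : Fin m, (b i - a i) / Real.exp (n : ℝ)) + 2 * m := by
      rw [Finset.sum_add_distrib, Finset.mul_sum, Finset.sum_const, Finset.card_univ,
        Fintype.card_fin, nsmul_eq_mul]
      congr 1
      · apply Finset.sum_congr rfl
        intro i _
        rw [hexpn]
        field_simp
      · ring
    have hEρ : Real.exp ((n : ℝ) * ρ) * Real.exp (-((n : ℝ) * ρ)) = 1 := by
      rw [← Real.exp_add]; simp
    have hchain : (K : ℝ) ≤ En * r + 2 * Real.exp ((n : ℝ) * ρ) * r := by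
      have h2m : (2 : ℝ) * m ≤ 2 * Real.exp ((n : ℝ) * ρ) * r := by
        have hh : (m : ℝ) ≤ Real.exp ((n : ℝ) * ρ) * r := by
          calc (m : ℝ) = Real.exp ((n : ℝ) * ρ) * ((m : ℝ) * Real.exp (-((n : ℝ) * ρ))) := by
                rw [← mul_assoc, mul_comm (Real.exp ((n : ℝ) * ρ)) (m : ℝ), mul_assoc, hEρ, mul_one]
            _ ≤ Real.exp ((n : ℝ) * ρ) * r := by
                apply mul_le_mul_of_nonneg_left hS2 (Real.exp_pos _).le
        linarith
      have hEnr : En * (∑ i : Fin m, (b i - a i) / Real.exp (n : ℝ)) ≤ En * r :=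
        mul_le_mul_of_nonneg_left hS1 hEnpos.le
      calc (K : ℝ) ≤ ∑ i : Fin m, ((b i - a i) / Eθ + 2) := hcount
        _ = En * (∑ i : Fin m, (b i - a i) / Real.exp (n : ℝ)) + 2 * m := hsplit
        _ ≤ En * r + 2 * Real.exp ((n : ℝ) * ρ) * r := by linarith
    have hfinal : En ≤ 2 * En * r := by
      have h1 : 2 * Real.exp ((n : ℝ) * ρ) * r ≤ En * r := by
        apply mul_le_mul_of_nonneg_right hn3 hrnonneg
      calc En ≤ (K : ℝ) := hKge
        _ ≤ En * r + 2 * Real.exp ((n : ℝ) * ρ) * r := hchain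
        _ ≤ En * r + En * r := by linarith
        _ = 2 * En * r := by ring
    have h12 : (1 : ℝ) ≤ 2 * r := by
      have hEn' : En * 1 ≤ En * (2 * r) := by
        rw [mul_one]
        calc En ≤ 2 * En * r := hfinal
          _ = En * (2 * r) := by ring
      exact le_of_mul_le_mul_left hEn' hEnpos
    linarith

/-- If `E ⊆ ℝ` is `θ`-thick for some `θ ∈ (0,1)`, then its Barlow–Taylor macroscopic
Hausdorff dimension is at least `1 − θ`. -/
theorem macroDimH_ge_of_thick (θ : ℝ) (hθ : θ ∈ Set.Ioo (0 : ℝ) 1) (E : Set ℝ)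
    (hE : IsThick θ E) : 1 - θ ≤ macroDimH E := by
  obtain ⟨hθ0, hθ1⟩ := hθ
  obtain ⟨M, hM⟩ := hE
  rw [macroDimH]
  have h2mem : (2 : ℝ) ∈ {ρ : ℝ | 0 < ρ ∧ Summable fun n : ℕ => nuCont 1 n ρ E} :=
    ⟨by norm_num, summable_nuCont_two E⟩
  apply le_csInf ⟨2, h2mem⟩
  rintro ρ ⟨hρ0, hsum⟩
  by_contra hcon
  push_neg at hcon
  -- hcon : ρ < 1 - θ
  have he2 : (2 : ℝ) < Real.exp 1 := by
    have := Real.exp_one_gt_d9; linarith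
  have hlim1 : Filter.Tendsto (fun k : ℕ => Real.exp ((k : ℝ) * (1 - θ)))
      Filter.atTop Filter.atTop :=
    Real.tendsto_exp_atTop.comp (tendsto_natCast_atTop_atTop.atTop_mul_const (by linarith))
  have hlim2 : Filter.Tendsto (fun k : ℕ => Real.exp ((k : ℝ) * (1 - θ - ρ)))
      Filter.atTop Filter.atTop :=
    Real.tendsto_exp_atTop.comp (tendsto_natCast_atTop_atTop.atTop_mul_const (by linarith))
  have hev1 : ∀ᶠ k : ℕ in Filter.atTop,
      2 / (Real.exp 1 - 2) ≤ Real.exp ((k : ℝ) * (1 - θ)) :=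
    hlim1.eventually_ge_atTop _
  have hev2 : ∀ᶠ k : ℕ in Filter.atTop,
      2 * Real.exp ((k : ℝ) * ρ) ≤ Real.exp ((k : ℝ) * (1 - θ)) := by
    filter_upwards [hlim2.eventually_ge_atTop 2] with k hk
    have : Real.exp ((k : ℝ) * (1 - θ)) =
        Real.exp ((k : ℝ) * (1 - θ - ρ)) * Real.exp ((k : ℝ) * ρ) := by
      rw [← Real.exp_add]; ring_nf
    rw [this]
    have := Real.exp_pos ((k : ℝ) * ρ)
    nlinarith
  have hev3 : ∀ᶠ k : ℕ in Filter.atTop, M ≤ k := Filter.eventually_ge_atTop M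
  have hevlb : ∀ᶠ k : ℕ in Filter.atTop, (1 / 4 : ℝ) ≤ nuCont 1 k ρ E := by
    filter_upwards [hev1, hev2, hev3] with k h1 h2 h3
    exact nuCont_lower θ ρ hθ0 hθ1 hρ0 hcon E M hM k h3 h1 h2
  have hsmall : ∀ᶠ k : ℕ in Filter.atTop, nuCont 1 k ρ E < 1 / 4 :=
    hsum.tendsto_atTop_zero.eventually_lt_const (by norm_num)
  obtain ⟨k, hk1, hk2⟩ := (hevlb.and hsmall).exists
  linarith
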